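/- Let G be a graph and H a finite family of connected nonnull subgraphs of G. Then the tree-independence number of the derived graph G(H) is at most the tree-independence number of G. In particular, for chordal G (tree-α(G) ≤ 1), the graph G(H) is chordal. -/

import Mathlib

open SimpleGraph

/-- `S` is an independent set in `G`. -/
def IsIndepOn {V : Type} (G : SimpleGraph V) (S : Set V) : Prop :=
  S.Pairwise fun u v => ¬ G.Adj u v

/-- The independence number of `G`. -/
noncomputable def indepNum {V : Type} (G : SimpleGraph V) : ℕ :=
  sSup {n | ∃ S : Set V, IsIndepOn G S ∧ S.ncard = n}

/-- The clique number of `G`. -/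
noncomputable def cliqueNumber {V : Type} (G : SimpleGraph V) : ℕ :=
  sSup {n | ∃ S : Set V, G.IsClique S ∧ S.ncard = n}

/-- A tree decomposition of a graph `G`. -/
structure TreeDecomp {V : Type} (G : SimpleGraph V) where
  ι : Type
  tree : SimpleGraph ι
  tree_isTree : tree.IsTree
  bag : ι → Set V
  mem_bag : ∀ v : V, ∃ t, v ∈ bag t
  edge_bag : ∀ ⦃u v : V⦄, G.Adj u v → ∃ t, u ∈ bag t ∧ v ∈ bag t
  bag_connected : ∀ v : V, (tree.induce {t | v ∈ bag t}).Connected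

/-- The independence number of a family of bags: the maximum independence number
of a subgraph of `G` induced by some bag. -/
noncomputable def bagAlpha {V : Type} (G : SimpleGraph V) {ι : Type} (bag : ι → Set V) : ℕ :=
  sSup {n | ∃ t, ∃ S : Set V, S ⊆ bag t ∧ IsIndepOn G S ∧ S.ncard = n}

/-- The independence number of a tree decomposition. -/
noncomputable def tdAlpha {V : Type} {G : SimpleGraph V} (td : TreeDecomp G) : ℕ :=
  bagAlpha G td.bag

/-- The width of a tree decomposition: maximum bag size minus one. -/
noncomputable def tdWidth {V : Type} {G : SimpleGraph V} (td : TreeDecomp G) : ℕ :=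
  sSup {n | ∃ t, (td.bag t).ncard = n} - 1

/-- The treewidth of `G`. -/
noncomputable def treewidth {V : Type} (G : SimpleGraph V) : ℕ :=
  sInf {w | ∃ td : TreeDecomp G, tdWidth td = w}

/-- The tree-independence number of `G`. -/
noncomputable def treeIndepNum {V : Type} (G : SimpleGraph V) : ℕ :=
  sInf {k | ∃ td : TreeDecomp G, tdAlpha td = k}

/-- A graph is chordal if it has no induced cycle of length at least four. -/
def Chordal {V : Type} (G : SimpleGraph V) : Prop :=
  ∀ n : ℕ, 4 ≤ n → IsEmpty (cycleGraph n ↪g G)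

/-- The derived graph `G(H)` of a family `H` of subgraphs of `G`: vertices are the
members of the family, two distinct members being adjacent if and only if they share
a vertex or `G` has an edge with one endpoint in each of them. -/
def derivedGraph {V : Type} (G : SimpleGraph V) {J : Type} (H : J → G.Subgraph) :
    SimpleGraph J :=
  SimpleGraph.fromRel fun i j =>
    (∃ v, v ∈ (H i).verts ∧ v ∈ (H j).verts) ∨
    (∃ a b, a ∈ (H i).verts ∧ b ∈ (H j).verts ∧ G.Adj a b)

/-! ### Auxiliary lemmas -/

namespace TAux

variable {ι : Type} {T : SimpleGraph ι}

/-- Walk with support in `S` yields reachability in the induced graph. -/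
lemma reach_induce_of_walk {S : Set ι} {x y : ι} (p : T.Walk x y)
    (hp : ∀ z ∈ p.support, z ∈ S) (hx : x ∈ S) (hy : y ∈ S) :
    (T.induce S).Reachable ⟨x, hx⟩ ⟨y, hy⟩ := by
  induction p with
  | nil => rfl
  | @cons a c d h q ih =>
      have hc : c ∈ S := hp c (by simp [Walk.support_cons])
      have h1 : (T.induce S).Adj ⟨a, hx⟩ ⟨c, hc⟩ := h
      exact (h1.reachable).trans (ih (fun z hz => hp z (by simp [Walk.support_cons, hz])) hc hy)

/-- Reachability in the induced graph yields a walk with support in `S`. -/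
lemma walk_of_reach_induce {S : Set ι} {a b : ↑S} (h : (T.induce S).Reachable a b) :
    ∃ p : T.Walk ↑a ↑b, ∀ z ∈ p.support, z ∈ S := by
  obtain ⟨q⟩ := h
  refine ⟨q.map (SimpleGraph.Embedding.induce S).toHom, ?_⟩
  intro z hz
  replace hz : z ∈ q.support.map (SimpleGraph.Embedding.induce (G := T) S).toHom := by
    rw [← Walk.support_map]; exact hz
  obtain ⟨w, _, rfl⟩ := List.mem_map.mp hz
  exact w.2

lemma reach_induce_mono {S S' : Set ι} (hSS : S ⊆ S') {a b : ι} (ha : a ∈ S) (hb : b ∈ S)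
    (h : (T.induce S).Reachable ⟨a, ha⟩ ⟨b, hb⟩) :
    (T.induce S').Reachable ⟨a, hSS ha⟩ ⟨b, hSS hb⟩ := by
  obtain ⟨p, hp⟩ := walk_of_reach_induce h
  exact reach_induce_of_walk p (fun z hz => hSS (hp z hz)) _ _

/-- The side of a tree edge containing `s`. -/
def side (T : SimpleGraph ι) (s t x : ι) : Prop :=
  (T \ fromEdgeSet {s(s, t)}).Reachable s x

lemma side_refl (s t : ι) : side T s t s := Reachable.refl _

lemma side_not_both (hT : T.IsTree) {s t : ι} (hst : T.Adj s t) (x : ι) :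
    ¬ (side T s t x ∧ side T t s x) := by
  rintro ⟨h1, h2⟩
  have hb : T.IsBridge s(s, t) := isAcyclic_iff_forall_adj_isBridge.mp hT.IsAcyclic hst
  rw [isBridge_iff] at hb
  have h2' : (T \ fromEdgeSet {s(t, s)}).Reachable t x := h2
  rw [Sym2.eq_swap] at h2'
  exact hb (h1.trans h2'.symm)

lemma side_step {s t u c : ι} (h : T.Adj u c) (hne : s(u, c) ≠ s(s, t)) :
    (T \ fromEdgeSet {s(s, t)}).Adj u c := by
  rw [sdiff_adj]
  refine ⟨h, ?_⟩
  rw [fromEdgeSet_adj]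
  rintro ⟨h1, -⟩
  exact hne (by simpa using h1)

lemma side_total (hT : T.IsTree) {s t : ι} (hst : T.Adj s t) (x : ι) :
    side T s t x ∨ side T t s x := by
  obtain ⟨p⟩ := hT.isConnected.preconnected s x
  have key : ∀ {u y : ι} (_ : T.Walk u y), (side T s t u ∨ side T t s u) →
      (side T s t y ∨ side T t s y) := by
    intro u y p
    induction p with
    | nil => exact id
    | @cons a c d h q ih =>
        intro ha
        apply ih
        by_cases he : s(a, c) = s(s, t)
        · rw [Sym2.eq_iff] at he
          rcases he with ⟨-, rfl⟩ | ⟨-, rfl⟩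
          · exact Or.inr (Reachable.refl _)
          · exact Or.inl (Reachable.refl _)
        · rcases ha with ha | ha
          · exact Or.inl (ha.trans (side_step h he).reachable)
          · refine Or.inr (ha.trans ?_)
            refine Adj.reachable (side_step h ?_)
            rw [show s(t, s) = s(s, t) from Sym2.eq_swap]
            exact he
  exact key p (Or.inl (Reachable.refl _))

/-- A walk from the `s`-side to the `t`-side of a tree edge passes through the edge. -/
lemma side_cross (hT : T.IsTree) {s t : ι} (hst : T.Adj s t) {u y : ι} (p : T.Walk u y)
    (hu : side T s t u) (hy : side T t s y) : s(s, t) ∈ p.edges := by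
  induction p with
  | nil => exact absurd ⟨hu, hy⟩ (side_not_both hT hst _)
  | @cons a c d h q ih =>
      by_cases he : s(a, c) = s(s, t)
      · rw [Walk.edges_cons, he]; exact List.mem_cons_self
      · have hc : side T s t c := hu.trans (side_step h he).reachable
        rw [Walk.edges_cons]
        exact List.mem_cons_of_mem _ (ih hc hy)

/-- A walk inside the tree that avoids a given edge stays on one side. -/
lemma side_of_walk_avoid {s t x y : ι} (q : T.Walk x y) (hq : s(s, t) ∉ q.edges)
    (hx : side T s t x) : side T s t y := by
  have hcast : ∀ e ∈ q.edges, e ∈ (T \ fromEdgeSet {s(s, t)}).edgeSet := by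
    intro e he
    rw [edgeSet_sdiff, Set.mem_diff]
    refine ⟨q.edges_subset_edgeSet he, ?_⟩
    rw [edgeSet_fromEdgeSet]
    rintro ⟨h1, -⟩
    rw [Set.mem_singleton_iff] at h1
    exact hq (h1 ▸ he)
  exact hx.trans ⟨q.transfer _ hcast⟩

variable {Vd : Type} {Gd : SimpleGraph Vd}

/-- Separator lemma: a walk from the `s`-side to the `t`-side of a tree decomposition
must contain a vertex belonging to both bags of the tree edge. -/
lemma separator (hT : T.IsTree) {X : ι → Set Vd}
    (edge_bag : ∀ ⦃u v : Vd⦄, Gd.Adj u v → ∃ r, u ∈ X r ∧ v ∈ X r)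
    (bag_conn : ∀ v, (T.induce {r | v ∈ X r}).Connected)
    {s t : ι} (hst : T.Adj s t) {a b : Vd} (p : Gd.Walk a b)
    (ha : ∀ r, a ∈ X r → ¬ side T t s r)
    (hb : ∃ r, b ∈ X r ∧ side T t s r) :
    ∃ w ∈ p.support, w ∈ X s ∧ w ∈ X t := by
  induction p with
  | nil => obtain ⟨r, h1, h2⟩ := hb; exact absurd h2 (ha r h1)
  | @cons a c d h q ih =>
      by_cases hc : ∃ r, c ∈ X r ∧ side T t s r
      · obtain ⟨r0, har0, hcr0⟩ := edge_bag h
        have hr0 : ¬ side T t s r0 := ha r0 har0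
        have hr0A : side T s t r0 := (side_total hT hst r0).resolve_right hr0
        obtain ⟨r1, hc1, hB1⟩ := hc
        obtain ⟨w, hw⟩ := walk_of_reach_induce
          ((bag_conn c).preconnected ⟨r0, hcr0⟩ ⟨r1, hc1⟩)
        have hedge := side_cross hT hst w hr0A hB1
        exact ⟨c, by simp [Walk.support_cons],
          hw s (Walk.fst_mem_support_of_mem_edges _ hedge),
          hw t (Walk.snd_mem_support_of_mem_edges _ hedge)⟩
      · push_neg at hc
        obtain ⟨w, hws, h1, h2⟩ := ih (fun r h1 h2 => hc r h1 h2) hb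
        exact ⟨w, by simp only [Walk.support_cons, List.mem_cons]; right; exact hws, h1, h2⟩

/-- If no bag contains two given vertices, there is a tree edge separating all bags
containing the first vertex from all bags containing the second vertex. -/
lemma choose_edge (hT : T.IsTree) {X : ι → Set Vd}
    (bag_conn : ∀ v, (T.induce {r | v ∈ X r}).Connected)
    {a b : Vd} (hdisj : ∀ r, ¬(a ∈ X r ∧ b ∈ X r))
    {ta tb : ι} (hta : a ∈ X ta) (htb : b ∈ X tb) :
    ∃ s t, T.Adj s t ∧ (∀ r, a ∈ X r → ¬ side T t s r) ∧
      (∀ r, b ∈ X r → ¬ side T s t r) := by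
  classical
  obtain ⟨p0⟩ := hT.isConnected.preconnected ta tb
  have key : ∀ {x y : ι} (p : T.Walk x y), p.IsPath → a ∈ X x → b ∈ X y →
      ∃ s t, T.Adj s t ∧ (∀ r, a ∈ X r → ¬ side T t s r) ∧
        (∀ r, b ∈ X r → ¬ side T s t r) := by
    intro x y p
    induction p with
    | nil => intro _ hx hy; exact absurd ⟨hx, hy⟩ (hdisj _)
    | @cons x c d h q ih =>
        intro hpath hx hy
        by_cases hc : a ∈ X c
        · exact ih hpath.of_cons hc hy
        · refine ⟨x, c, h, ?_, ?_⟩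
          · -- no bag of a is on the c-side
            intro r har hside
            obtain ⟨w, hw⟩ := walk_of_reach_induce
              ((bag_conn a).preconnected (⟨x, hx⟩ : {r | a ∈ X r}) ⟨r, har⟩)
            have hedge := side_cross hT h w (Reachable.refl _) hside
            exact hc (hw c (Walk.snd_mem_support_of_mem_edges _ hedge))
          · -- no bag of b is on the x-side
            intro r hbr hside
            have hnotin : s(x, c) ∉ q.edges := by
              have := hpath.isTrail.edges_nodup
              rw [Walk.edges_cons] at this
              exact (List.nodup_cons.mp this).1
            have htbB : side T c x d := by
              refine side_of_walk_avoid q ?_ (Reachable.refl _)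
              rwa [Sym2.eq_swap]
            obtain ⟨w, hw⟩ := walk_of_reach_induce
              ((bag_conn b).preconnected (⟨d, hy⟩ : {r | b ∈ X r}) ⟨r, hbr⟩)
            have hedge := side_cross hT h.symm w htbB hside
            exact hdisj x ⟨hx, hw x (Walk.snd_mem_support_of_mem_edges _ hedge)⟩
  exact key ((p0.toPath : T.Path ta tb) : T.Walk ta tb) (p0.toPath).2 hta htb

end TAux

/-- The trivial tree decomposition with one bag equal to everything. -/
noncomputable def trivTD {V : Type} (G : SimpleGraph V) : TreeDecomp G where
  ι := Unit
  tree := ⊥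
  tree_isTree := ⟨⟨fun a b => by rw [Subsingleton.elim a b]⟩, isAcyclic_bot⟩
  bag _ := Set.univ
  mem_bag v := ⟨(), trivial⟩
  edge_bag u v _ := ⟨(), trivial, trivial⟩
  bag_connected v := by
    haveI : Nonempty ↑{t : Unit | v ∈ (Set.univ : Set V)} := ⟨⟨(), trivial⟩⟩
    exact ⟨fun a b => by rw [Subsingleton.elim a b]⟩

lemma bagAlpha_bddAbove {V : Type} [Fintype V] (G : SimpleGraph V) {ι : Type}
    (bag : ι → Set V) :
    BddAbove {n | ∃ t, ∃ S : Set V, S ⊆ bag t ∧ IsIndepOn G S ∧ S.ncard = n} := by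
  refine ⟨Fintype.card V, ?_⟩
  rintro n ⟨t, S, -, -, rfl⟩
  calc S.ncard ≤ (Set.univ : Set V).ncard :=
        Set.ncard_le_ncard (Set.subset_univ S) Set.finite_univ
    _ = Fintype.card V := by rw [Set.ncard_univ, Nat.card_eq_fintype_card]

/-- In a decomposition with independence number at most one, every bag is a clique. -/
lemma bags_clique {J : Type} [Fintype J] {Gd : SimpleGraph J} (td : TreeDecomp Gd)
    (h1 : tdAlpha td ≤ 1) (t : td.ι) : Gd.IsClique (td.bag t) := by
  intro u hu v hv huv
  by_contra hadj
  have hS : IsIndepOn Gd {u, v} := by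
    have hsymm : Symmetric (fun u v => ¬ Gd.Adj u v) := fun x y h hadj' => h hadj'.symm
    rw [IsIndepOn, Set.pairwise_pair]
    exact fun _ => ⟨hadj, hsymm hadj⟩
  have h2 : (2 : ℕ) ∈ {n | ∃ t, ∃ S : Set J, S ⊆ td.bag t ∧ IsIndepOn Gd S ∧ S.ncard = n} := by
    refine ⟨t, {u, v}, ?_, hS, Set.ncard_pair huv⟩
    rintro z (rfl | rfl) <;> assumption
  have := le_csSup (bagAlpha_bddAbove Gd td.bag) h2
  rw [tdAlpha, bagAlpha] at h1
  omega

lemma fin_sub_val {n k l : ℕ} (hk : k < n) (hl : l < n) :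
    ((⟨k, hk⟩ : Fin n) - ⟨l, hl⟩).val = if l ≤ k then k - l else k + n - l := by
  rw [Fin.sub_def]
  simp only
  rcases le_or_gt l k with h | h
  · rw [if_pos h]
    have : n - l + k = (k - l) + n := by omega
    rw [this, Nat.add_mod_right, Nat.mod_eq_of_lt (by omega)]
  · rw [if_neg (by omega)]
    rw [Nat.mod_eq_of_lt (by omega)]
    omega

/-- A graph with tree-independence number at most one is chordal. -/
lemma chordal_of_treeIndepNum_le_one {J : Type} [Fintype J] (Gd : SimpleGraph J)
    (h : treeIndepNum Gd ≤ 1) : Chordal Gd := by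
  have hSne : {k | ∃ td : TreeDecomp Gd, tdAlpha td = k}.Nonempty := ⟨_, trivTD Gd, rfl⟩
  obtain ⟨td, htd⟩ := Nat.sInf_mem hSne
  have h1 : tdAlpha td ≤ 1 := le_trans (le_of_eq htd) h
  have hclique : ∀ t, Gd.IsClique (td.bag t) := bags_clique td h1
  intro n hn
  constructor
  intro f
  set T := td.tree with hT
  set X := td.bag with hX
  have h0n : (0 : ℕ) < n := by omega
  have h1n : (1 : ℕ) < n := by omega
  have h2n : (2 : ℕ) < n := by omega
  have hcadj : ∀ (k l : ℕ) (hk : k < n) (hl : l < n),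
      (cycleGraph n).Adj ⟨k, hk⟩ ⟨l, hl⟩ ↔
        ((if l ≤ k then k - l else k + n - l) = 1 ∨
         (if k ≤ l then l - k else l + n - k) = 1) := by
    intro k l hk hl
    rw [cycleGraph_adj', fin_sub_val hk hl, fin_sub_val hl hk]
  have hab_ne : f ⟨0, h0n⟩ ≠ f ⟨2, h2n⟩ := by
    intro hab
    have := f.injective hab
    rw [Fin.mk.injEq] at this
    omega
  have hnadj : ¬ Gd.Adj (f ⟨0, h0n⟩) (f ⟨2, h2n⟩) := by
    intro hadj
    have h' := f.map_rel_iff.mp hadj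
    rw [hcadj] at h'
    rcases h' with h' | h' <;> split at h' <;> omega
  have hdisj : ∀ r, ¬(f ⟨0, h0n⟩ ∈ X r ∧ f ⟨2, h2n⟩ ∈ X r) := by
    rintro r ⟨h1', h2'⟩
    exact hnadj (hclique r h1' h2' hab_ne)
  obtain ⟨ta, hta⟩ := td.mem_bag (f ⟨0, h0n⟩)
  obtain ⟨tb, htb⟩ := td.mem_bag (f ⟨2, h2n⟩)
  obtain ⟨s, t, hst, hA, hB⟩ :=
    TAux.choose_edge td.tree_isTree td.bag_connected hdisj hta htb
  have hbex : ∃ r, f ⟨2, h2n⟩ ∈ X r ∧ TAux.side T t s r :=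
    ⟨tb, htb, (TAux.side_total td.tree_isTree hst.symm tb).resolve_right (hB tb htb)⟩
  -- the short walk through f 1
  have hadj01 : Gd.Adj (f ⟨0, h0n⟩) (f ⟨1, h1n⟩) := by
    rw [f.map_rel_iff, hcadj]
    exact Or.inr (by rw [if_pos (by omega)])
  have hadj12 : Gd.Adj (f ⟨1, h1n⟩) (f ⟨2, h2n⟩) := by
    rw [f.map_rel_iff, hcadj]
    exact Or.inr (by rw [if_pos (by omega)])
  obtain ⟨w1, hw1sup, hw1s, hw1t⟩ :=
    TAux.separator td.tree_isTree td.edge_bag td.bag_connected hst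
      (Walk.cons hadj01 (Walk.cons hadj12 Walk.nil)) hA hbex
  have hf1 : f ⟨1, h1n⟩ ∈ X s ∧ f ⟨1, h1n⟩ ∈ X t := by
    simp only [Walk.support_cons, Walk.support_nil, List.mem_cons,
      List.mem_singleton, List.not_mem_nil, or_false] at hw1sup
    rcases hw1sup with h' | h' | h'
    · exact absurd (h' ▸ hw1t) (fun hh => hA t hh (TAux.side_refl t s))
    · exact ⟨h' ▸ hw1s, h' ▸ hw1t⟩
    · exact absurd (h' ▸ hw1s) (fun hh => hB s hh (TAux.side_refl s t))
  -- the long walk a - f (n-1) - ... - f 2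
  have longwalk : ∀ (m : ℕ) (hm : m + 2 < n), ∃ w : Gd.Walk (f ⟨m + 2, hm⟩) (f ⟨2, h2n⟩),
      ∀ z ∈ w.support, ∃ k : ℕ, ∃ hk : k < n, 2 ≤ k ∧ k ≤ m + 2 ∧ z = f ⟨k, hk⟩ := by
    intro m
    induction m with
    | zero =>
        intro hm
        refine ⟨Walk.nil, ?_⟩
        intro z hz
        rw [Walk.support_nil, List.mem_singleton] at hz
        exact ⟨2, hm, le_refl 2, le_refl 2, hz⟩
    | succ m ih =>
        intro hm
        obtain ⟨w, hw⟩ := ih (by omega)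
        have hadj' : Gd.Adj (f ⟨m + 1 + 2, hm⟩) (f ⟨m + 2, by omega⟩) := by
          rw [f.map_rel_iff, hcadj]
          exact Or.inl (by rw [if_pos (by omega)]; omega)
        refine ⟨Walk.cons hadj' w, ?_⟩
        intro z hz
        rw [Walk.support_cons, List.mem_cons] at hz
        rcases hz with rfl | hz
        · exact ⟨m + 1 + 2, hm, by omega, le_refl _, rfl⟩
        · obtain ⟨k, hk, h2k, hkm, rfl⟩ := hw z hz
          exact ⟨k, hk, h2k, by omega, rfl⟩
  obtain ⟨w2, hw2⟩ := longwalk (n - 3) (by omega)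
  have hadj0N : Gd.Adj (f ⟨0, h0n⟩) (f ⟨n - 3 + 2, by omega⟩) := by
    rw [f.map_rel_iff, hcadj]
    refine Or.inl ?_
    rw [if_neg (by omega)]
    omega
  obtain ⟨w, hwsup, hws, hwt⟩ :=
    TAux.separator td.tree_isTree td.edge_bag td.bag_connected hst
      (Walk.cons hadj0N w2) hA hbex
  rw [Walk.support_cons, List.mem_cons] at hwsup
  have hkey : ∃ k : ℕ, ∃ hk : k < n, 3 ≤ k ∧ k ≤ n - 1 ∧ w = f ⟨k, hk⟩ := by
    rcases hwsup with rfl | hz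
    · exact absurd hwt (fun hh => hA t hh (TAux.side_refl t s))
    · obtain ⟨k, hk, h2k, hkm, rfl⟩ := hw2 _ hz
      rcases Nat.eq_or_lt_of_le h2k with h2k' | h2k'
      · exfalso
        have : f ⟨k, hk⟩ = f ⟨2, h2n⟩ := by congr 1; exact Fin.ext h2k'.symm
        exact hB s (this ▸ hws) (TAux.side_refl s t)
      · exact ⟨k, hk, by omega, by omega, rfl⟩
  obtain ⟨k, hk, h3k, hkn, rfl⟩ := hkey
  have hne1k : f ⟨1, h1n⟩ ≠ f ⟨k, hk⟩ := by
    intro h'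
    have := f.injective h'
    rw [Fin.mk.injEq] at this
    omega
  have hadj1k := hclique s hf1.1 hws hne1k
  rw [f.map_rel_iff, hcadj] at hadj1k
  rcases hadj1k with h' | h' <;> split at h' <;> omega

/-- The tree decomposition of the derived graph obtained from a tree decomposition of `G`. -/
noncomputable def derivedTD {V : Type} (G : SimpleGraph V) {J : Type} (H : J → G.Subgraph)
    (hne : ∀ j, (H j).verts.Nonempty) (hconn : ∀ j, (H j).Connected)
    (td : TreeDecomp G) : TreeDecomp (derivedGraph G H) where
  ι := td.ι
  tree := td.tree
  tree_isTree := td.tree_isTree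
  bag t := {j | ∃ v ∈ (H j).verts, v ∈ td.bag t}
  mem_bag j := by
    obtain ⟨v, hv⟩ := hne j
    obtain ⟨t, ht⟩ := td.mem_bag v
    exact ⟨t, show ∃ v ∈ (H j).verts, v ∈ td.bag t from ⟨v, hv, ht⟩⟩
  edge_bag i j hadj := by
    rw [derivedGraph, fromRel_adj] at hadj
    obtain ⟨-, (⟨v, hv1, hv2⟩ | ⟨x, y, hx, hy, hxy⟩) | (⟨v, hv1, hv2⟩ | ⟨x, y, hx, hy, hxy⟩)⟩ :=
      hadj
    · obtain ⟨t, ht⟩ := td.mem_bag v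
      exact ⟨t, ⟨v, hv1, ht⟩, ⟨v, hv2, ht⟩⟩
    · obtain ⟨t, ht1, ht2⟩ := td.edge_bag hxy
      exact ⟨t, ⟨x, hx, ht1⟩, ⟨y, hy, ht2⟩⟩
    · obtain ⟨t, ht⟩ := td.mem_bag v
      exact ⟨t, ⟨v, hv2, ht⟩, ⟨v, hv1, ht⟩⟩
    · obtain ⟨t, ht1, ht2⟩ := td.edge_bag hxy
      exact ⟨t, ⟨y, hy, ht2⟩, ⟨x, hx, ht1⟩⟩
  bag_connected j := by
    have hnonempty : ∃ t, j ∈ {j | ∃ v ∈ (H j).verts, v ∈ td.bag t} := by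
      obtain ⟨v, hv⟩ := hne j
      obtain ⟨t, ht⟩ := td.mem_bag v
      exact ⟨t, v, hv, ht⟩
    obtain ⟨t0, ht0⟩ := hnonempty
    haveI : Nonempty ↑{t | j ∈ {j | ∃ v ∈ (H j).verts, v ∈ td.bag t}} := ⟨⟨t0, ht0⟩⟩
    refine ⟨?_⟩
    rintro ⟨t1, ht1⟩ ⟨t2, ht2⟩
    obtain ⟨v1, hv1, hb1⟩ := ht1
    obtain ⟨v2, hv2, hb2⟩ := ht2
    have step : ∀ (v : V) (hv : v ∈ (H j).verts) (t1 t2 : td.ι)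
        (h1 : v ∈ td.bag t1) (h2 : v ∈ td.bag t2),
        (td.tree.induce {t | ∃ v ∈ (H j).verts, v ∈ td.bag t}).Reachable
          ⟨t1, ⟨v, hv, h1⟩⟩ ⟨t2, ⟨v, hv, h2⟩⟩ := by
      intro v hv t1 t2 h1 h2
      exact TAux.reach_induce_mono
        (fun t ht => show ∃ u ∈ (H j).verts, u ∈ td.bag t from ⟨v, hv, ht⟩) h1 h2
        ((td.bag_connected v).preconnected ⟨t1, h1⟩ ⟨t2, h2⟩)
    have key : ∀ (x y : (H j).verts) (p : (H j).coe.Walk x y) (t1 t2 : td.ι)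
        (h1 : ↑x ∈ td.bag t1) (h2 : ↑y ∈ td.bag t2),
        (td.tree.induce {t | ∃ v ∈ (H j).verts, v ∈ td.bag t}).Reachable
          ⟨t1, ⟨↑x, x.2, h1⟩⟩ ⟨t2, ⟨↑y, y.2, h2⟩⟩ := by
      intro x y p
      induction p with
      | nil => intro t1 t2 h1 h2; exact step _ (Subtype.coe_prop _) t1 t2 h1 h2
      | @cons x c y h q ih =>
          intro t1 t2 h1 h2
          have hG : G.Adj ↑x ↑c := ((H j).coe_adj x c).mp h |>.adj_sub
          obtain ⟨r, hxr, hcr⟩ := td.edge_bag hG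
          exact (step _ x.2 t1 r h1 hxr).trans (ih r t2 hcr h2)
    exact key ⟨v1, hv1⟩ ⟨v2, hv2⟩ ((hconn j).coe.preconnected _ _).some t1 t2 hb1 hb2

theorem stmt19 {V : Type} [Fintype V] (G : SimpleGraph V)
    {J : Type} [Fintype J] (H : J → G.Subgraph)
    (hne : ∀ j, (H j).verts.Nonempty) (hconn : ∀ j, (H j).Connected) :
    treeIndepNum (derivedGraph G H) ≤ treeIndepNum G ∧
    (treeIndepNum G ≤ 1 → Chordal (derivedGraph G H)) := by
  classical
  have hpart1 : treeIndepNum (derivedGraph G H) ≤ treeIndepNum G := by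
    have hSne : {k | ∃ td : TreeDecomp G, tdAlpha td = k}.Nonempty := ⟨_, trivTD G, rfl⟩
    obtain ⟨td, htd⟩ := Nat.sInf_mem hSne
    have hle : tdAlpha (derivedTD G H hne hconn td) ≤ tdAlpha td := by
      rw [tdAlpha, tdAlpha, bagAlpha, bagAlpha]
      refine csSup_le_csSup (bagAlpha_bddAbove G td.bag) ?_ ?_
      · -- nonemptiness of the first set
        obtain ⟨t0⟩ := td.tree_isTree.isConnected.nonempty
        exact ⟨0, t0, ∅, Set.empty_subset _, Set.pairwise_empty _, Set.ncard_empty _⟩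
      · rintro n ⟨t, S', hsub, hind, hcard⟩
        set g : J → V := fun j =>
          if h' : ∃ v, v ∈ (H j).verts ∧ v ∈ td.bag t then h'.choose else (hne j).choose
          with hg
        have hgprop : ∀ j ∈ S', g j ∈ (H j).verts ∧ g j ∈ td.bag t := by
          intro j hj
          have h' : ∃ v, v ∈ (H j).verts ∧ v ∈ td.bag t := by
            obtain ⟨v, hv1, hv2⟩ := hsub hj
            exact ⟨v, hv1, hv2⟩
          rw [hg]
          simp only [dif_pos h']
          exact h'.choose_spec
        have hinj : Set.InjOn g S' := by
          intro i hi j hj hij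
          by_contra hne'
          have hadj : (derivedGraph G H).Adj i j := by
            rw [derivedGraph, fromRel_adj]
            exact ⟨hne', Or.inl (Or.inl ⟨g i, (hgprop i hi).1, hij ▸ (hgprop j hj).1⟩)⟩
          exact hind hi hj hne' hadj
        refine ⟨t, g '' S', ?_, ?_, ?_⟩
        · rintro v ⟨i, hi, rfl⟩
          exact (hgprop i hi).2
        · rintro u ⟨i, hi, rfl⟩ v ⟨j, hj, rfl⟩ huv hadj
          have hij : i ≠ j := fun h' => huv (h' ▸ rfl)
          have : (derivedGraph G H).Adj i j := by
            rw [derivedGraph, fromRel_adj]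
            exact ⟨hij, Or.inl (Or.inr ⟨g i, g j, (hgprop i hi).1, (hgprop j hj).1, hadj⟩)⟩
          exact hind hi hj hij this
        · rw [Set.ncard_image_of_injOn hinj, hcard]
    calc treeIndepNum (derivedGraph G H) ≤ tdAlpha (derivedTD G H hne hconn td) :=
          Nat.sInf_le ⟨_, rfl⟩
      _ ≤ tdAlpha td := hle
      _ = treeIndepNum G := htd
  exact ⟨hpart1, fun h1 =>
    chordal_of_treeIndepNum_le_one _ (le_trans hpart1 h1)⟩
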